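/- For 0 ≤ α < 1, the n×n matrix Q with Q_{ij} = α^{max(i,j)} is positive semidefinite. -/

import Mathlib

open Matrix

theorem stmt_10 (n : ℕ) (hn : 1 ≤ n) (α : ℝ) (hα0 : 0 ≤ α) (hα1 : α < 1)
    (Q : Matrix (Fin n) (Fin n) ℝ)
    (hQ : ∀ i j, Q i j = α ^ (max i.1 j.1 + 1)) :
    Q.PosSemidef := by
  set c : ℕ → ℝ := fun k => α ^ (k + 1) - α ^ (k + 2) + (if k = n - 1 then α ^ (n + 1) else 0)
    with hc
  have hcnn : ∀ k, 0 ≤ c k := by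
    intro k
    have h1 : α ^ (k + 2) ≤ α ^ (k + 1) :=
      pow_le_pow_of_le_one hα0 hα1.le (by omega)
    have h2 : (0:ℝ) ≤ if k = n - 1 then α ^ (n + 1) else 0 := by
      split <;> positivity
    simp only [hc]
    linarith
  set A : Matrix (Fin n) (Fin n) ℝ :=
    fun k i => if i.1 ≤ k.1 then Real.sqrt (c k.1) else 0 with hA
  have key : Q = Aᴴ * A := by
    ext i j
    rw [hQ]
    simp only [Matrix.mul_apply, Matrix.conjTranspose_apply, RCLike.star_def]; simp only [hA]
    have hterm : ∀ k : Fin n,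
        (starRingEnd ℝ) (if i.1 ≤ k.1 then Real.sqrt (c k.1) else 0) *
          (if j.1 ≤ k.1 then Real.sqrt (c k.1) else 0)
        = if max i.1 j.1 ≤ k.1 then c k.1 else 0 := by
      intro k
      simp only [starRingEnd_apply, star_trivial]
      by_cases h1 : i.1 ≤ k.1 <;> by_cases h2 : j.1 ≤ k.1 <;>
        simp [h1, h2, max_le_iff, Real.mul_self_sqrt (hcnn k.1)]
    rw [Finset.sum_congr rfl (fun k _ => hterm k)]
    rw [Fin.sum_univ_eq_sum_range (fun k => if max i.1 j.1 ≤ k then c k else 0)]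
    set m := max i.1 j.1 with hm
    have hmn : m < n := by
      have := i.2; have := j.2; omega
    rw [← Finset.sum_filter]
    have hfil : (Finset.range n).filter (fun k => m ≤ k) = Finset.Ico m n := by
      ext k; simp only [Finset.mem_filter, Finset.mem_range, Finset.mem_Ico]; omega
    rw [hfil]
    have hsplit : ∑ k ∈ Finset.Ico m n, c k =
        (∑ k ∈ Finset.Ico m n, (α ^ (k + 1) - α ^ (k + 2))) +
        ∑ k ∈ Finset.Ico m n, (if k = n - 1 then α ^ (n + 1) else 0) := by
      rw [← Finset.sum_add_distrib]
    rw [hsplit]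
    have h1 : ∑ k ∈ Finset.Ico m n, (α ^ (k + 1) - α ^ (k + 2)) =
        α ^ (m + 1) - α ^ (n + 1) := by
      rw [Finset.sum_Ico_eq_sum_range]
      have : ∀ k, α ^ (m + k + 1) - α ^ (m + k + 2) =
          (fun j => α ^ (m + 1 + j)) k - (fun j => α ^ (m + 1 + j)) (k + 1) := by
        intro k; ring_nf
      rw [Finset.sum_congr rfl fun k _ => this k, Finset.sum_range_sub']
      have : m + 1 + (n - m) = n + 1 := by omega
      simp [this]
    have h2 : ∑ k ∈ Finset.Ico m n, (if k = n - 1 then α ^ (n + 1) else 0) =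
        α ^ (n + 1) := by
      rw [Finset.sum_ite_eq' (Finset.Ico m n) (n - 1) (fun _ => α ^ (n + 1))]
      simp only [Finset.mem_Ico, if_pos (by omega : m ≤ n - 1 ∧ n - 1 < n)]
    rw [h1, h2]; ring
  rw [key]
  exact Matrix.posSemidef_conjTranspose_mul_self A
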